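/- (Sum formula for qMZVs in weight k+1, depth 2) For 0 < q < 1 and an integer k ≥ 2, Σ_{j=0}^{k-2} ζ_q(k-j, j+1) = ζ_q(k+1). -/

import Mathlib

open scoped BigOperators

/-- The q-integer [m] = (1-q^m)/(1-q). -/
noncomputable def qint (q : ℝ) (m : ℕ) : ℝ := (1 - q ^ m) / (1 - q)

/-- Depth-one q-zeta value ζ_q(k) = Σ_{m≥1} q^{(k-1)m}/[m]^k. -/
noncomputable def zetaQ (q : ℝ) (k : ℕ) : ℝ :=
  ∑' m : ℕ, q ^ ((k - 1) * (m + 1)) / (qint q (m + 1)) ^ k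

/-- Depth-two qMZV: sum over m₁ > m₂ ≥ 1, parametrized by m₂ = p.2+1, m₁ = p.2+p.1+2. -/
noncomputable def zetaQ2 (q : ℝ) (k₁ k₂ : ℕ) : ℝ :=
  ∑' p : ℕ × ℕ,
    q ^ ((k₁ - 1) * (p.2 + p.1 + 2) + (k₂ - 1) * (p.2 + 1)) /
      ((qint q (p.2 + p.1 + 2)) ^ k₁ * (qint q (p.2 + 1)) ^ k₂)

/-- Depth-two qMZSV: sum over m₁ ≥ m₂ ≥ 1, parametrized by m₂ = p.2+1, m₁ = p.2+p.1+1. -/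
noncomputable def zetaQStar2 (q : ℝ) (k₁ k₂ : ℕ) : ℝ :=
  ∑' p : ℕ × ℕ,
    q ^ ((k₁ - 1) * (p.2 + p.1 + 1) + (k₂ - 1) * (p.2 + 1)) /
      ((qint q (p.2 + p.1 + 1)) ^ k₁ * (qint q (p.2 + 1)) ^ k₂)

/-- Interpolated q-double zeta value. -/
noncomputable def zetaQT (q t : ℝ) (k₁ k₂ : ℕ) : ℝ :=
  zetaQ2 q k₁ k₂ + t * (zetaQ q (k₁ + k₂) + (1 - q) * zetaQ q (k₁ + k₂ - 1))

namespace Stmt7Aux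

/-- Partial sums S_m = Σ_{i=1}^m q^i/[i]. -/
noncomputable def qS (q : ℝ) (m : ℕ) : ℝ :=
  ∑ i ∈ Finset.range m, q ^ (i + 1) / qint q (i + 1)

/-- The quantity A_m = q^m/[m]. -/
noncomputable def qA (q : ℝ) (m : ℕ) : ℝ := q ^ m / qint q m

/-- Equivalence between the triangle and ℕ × ℕ. -/
def triEquiv : (Σ _n : ℕ, Fin (_n + 1)) ≃ ℕ × ℕ where
  toFun x := (x.1 - x.2.val, x.2.val)
  invFun p := ⟨p.1 + p.2, ⟨p.2, by omega⟩⟩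
  left_inv := by
    rintro ⟨n, b⟩
    have hb : (b : ℕ) ≤ n := Nat.lt_succ_iff.mp b.isLt
    have h : n - (b : ℕ) + (b : ℕ) = n := by omega
    dsimp only
    exact Sigma.ext h ((Fin.heq_ext_iff (by simp [h])).mpr rfl)
  right_inv := by rintro ⟨i, j⟩; simp

variable {q : ℝ}

lemma one_sub_pos (hq1 : q < 1) : (0 : ℝ) < 1 - q := by linarith

lemma qpow_le_q (hq0 : 0 < q) (hq1 : q < 1) {m : ℕ} (hm : 1 ≤ m) : q ^ m ≤ q := by
  simpa using pow_le_pow_of_le_one hq0.le hq1.le hm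

lemma qpow_lt_one (hq0 : 0 < q) (hq1 : q < 1) {m : ℕ} (hm : 1 ≤ m) : q ^ m < 1 :=
  lt_of_le_of_lt (qpow_le_q hq0 hq1 hm) hq1

lemma qint_pos (hq0 : 0 < q) (hq1 : q < 1) {m : ℕ} (hm : 1 ≤ m) : 0 < qint q m :=
  div_pos (by linarith [qpow_lt_one hq0 hq1 hm]) (one_sub_pos hq1)

lemma qint_one_le (hq0 : 0 < q) (hq1 : q < 1) {m : ℕ} (hm : 1 ≤ m) : 1 ≤ qint q m :=
  (one_le_div (one_sub_pos hq1)).mpr (by linarith [qpow_le_q hq0 hq1 hm])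

lemma qint_one (hq1 : q < 1) : qint q 1 = 1 := by
  unfold qint; rw [pow_one, div_self (one_sub_pos hq1).ne']

lemma qint_add (hq1 : q < 1) (a b : ℕ) :
    qint q (a + b) = qint q a + q ^ a * qint q b := by
  have h : (1 : ℝ) - q ≠ 0 := (one_sub_pos hq1).ne'
  unfold qint; rw [pow_add]; field_simp; ring

lemma qA_eq (hq0 : 0 < q) (hq1 : q < 1) {m : ℕ} (hm : 1 ≤ m) :
    qA q m = 1 / qint q m - (1 - q) := by
  have h : (1 : ℝ) - q ≠ 0 := (one_sub_pos hq1).ne'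
  have h2 : (1 : ℝ) - q ^ m ≠ 0 := by
    have := qpow_lt_one hq0 hq1 hm; linarith
  unfold qA qint; field_simp; ring

lemma qA_nonneg (hq0 : 0 < q) (hq1 : q < 1) (m : ℕ) : 0 ≤ qA q m := by
  rcases Nat.eq_zero_or_pos m with h | h
  · simp [qA, h, qint]
  · exact le_of_lt (div_pos (pow_pos hq0 m) (qint_pos hq0 hq1 h))

lemma qA_le (hq0 : 0 < q) (hq1 : q < 1) {m : ℕ} (hm : 1 ≤ m) : qA q m ≤ q ^ m := by
  unfold qA
  exact div_le_self (le_of_lt (pow_pos hq0 m)) (qint_one_le hq0 hq1 hm)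

lemma qS_nonneg (hq0 : 0 < q) (hq1 : q < 1) (m : ℕ) : 0 ≤ qS q m := by
  apply Finset.sum_nonneg
  intro i _
  exact div_nonneg (le_of_lt (pow_pos hq0 _)) (le_of_lt (qint_pos hq0 hq1 (by omega)))

lemma qS_le (hq0 : 0 < q) (hq1 : q < 1) (m : ℕ) : qS q m ≤ q / (1 - q) := by
  have h1 : qS q m ≤ ∑ i ∈ Finset.range m, q ^ (i + 1) := by
    apply Finset.sum_le_sum
    intro i _
    exact div_le_self (le_of_lt (pow_pos hq0 _)) (qint_one_le hq0 hq1 (by omega))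
  have h2 : ∑ i ∈ Finset.range m, q ^ (i + 1) = q * ∑ i ∈ Finset.range m, q ^ i := by
    rw [Finset.mul_sum]; exact Finset.sum_congr rfl fun i _ => by ring
  have h3 : ∑ i ∈ Finset.range m, q ^ i ≤ (1 - q)⁻¹ := by
    have := Summable.sum_le_tsum (Finset.range m) (fun i _ => le_of_lt (pow_pos hq0 i))
      (summable_geometric_of_lt_one hq0.le hq1)
    rwa [tsum_geometric_of_lt_one hq0.le hq1] at this
  calc qS q m ≤ q * ∑ i ∈ Finset.range m, q ^ i := by rw [← h2]; exact h1
    _ ≤ q * (1 - q)⁻¹ := by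
        exact mul_le_mul_of_nonneg_left h3 hq0.le
    _ = q / (1 - q) := by rw [div_eq_mul_inv]

lemma qS_one : qS q 1 = q / qint q 1 := by simp [qS]

lemma qS_succ (m : ℕ) : qS q (m + 1) = qS q m + q ^ (m + 1) / qint q (m + 1) :=
  Finset.sum_range_succ _ m

/-- Summability from geometric bound on ℕ. -/
lemma summable_of_le_geom (hq0 : 0 < q) (hq1 : q < 1) {C : ℝ} {f : ℕ → ℝ}
    (h0 : ∀ n, 0 ≤ f n) (hle : ∀ n, f n ≤ C * q ^ n) : Summable f :=
  Summable.of_nonneg_of_le h0 hle ((summable_geometric_of_lt_one hq0.le hq1).mul_left C)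

/-- Summability from geometric bound on ℕ × ℕ. -/
lemma summable_of_le_geom2 (hq0 : 0 < q) (hq1 : q < 1) {f : ℕ × ℕ → ℝ}
    (h0 : ∀ p, 0 ≤ f p) (hle : ∀ p, f p ≤ q ^ p.1 * q ^ p.2) : Summable f := by
  refine Summable.of_nonneg_of_le h0 hle ?_
  exact Summable.mul_of_nonneg (summable_geometric_of_lt_one hq0.le hq1)
    (summable_geometric_of_lt_one hq0.le hq1)
    (fun n => le_of_lt (pow_pos hq0 n)) (fun n => le_of_lt (pow_pos hq0 n))

/-- The limit 1/[n+1] → 1 - q. -/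
lemma tendsto_one_div_qint (hq0 : 0 < q) (hq1 : q < 1) :
    Filter.Tendsto (fun n : ℕ => 1 / qint q (n + 1)) Filter.atTop (nhds (1 - q)) := by
  have h : ∀ n : ℕ, 1 / qint q (n + 1) = (1 - q) / (1 - q ^ (n + 1)) := by
    intro n; unfold qint; rw [one_div_div]
  simp only [h]
  have hpow : Filter.Tendsto (fun n : ℕ => q ^ (n + 1)) Filter.atTop (nhds 0) := by
    have := tendsto_pow_atTop_nhds_zero_of_lt_one hq0.le hq1
    exact this.comp (Filter.tendsto_add_atTop_nat 1)
  have : Filter.Tendsto (fun n : ℕ => (1 - q) / (1 - q ^ (n + 1))) Filter.atTop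
      (nhds ((1 - q) / (1 - 0))) :=
    Filter.Tendsto.div tendsto_const_nhds (tendsto_const_nhds.sub hpow) (by norm_num)
  simpa using this

lemma qint_mono_succ (hq0 : 0 < q) (hq1 : q < 1) (n : ℕ) : qint q (n + 1) ≤ qint q (n + 2) := by
  have h := qint_add hq1 (n + 1) 1
  rw [qint_one hq1] at h
  have : 0 < q ^ (n + 1) := pow_pos hq0 _
  calc qint q (n + 1) ≤ qint q (n + 1) + q ^ (n + 1) * 1 := by nlinarith
    _ = qint q (n + 1 + 1) := h.symm

/-- Single telescoping series. -/
lemma telescope_single (hq0 : 0 < q) (hq1 : q < 1) (t : ℕ) :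
    HasSum (fun i : ℕ => 1 / qint q (i + t + 1) - 1 / qint q (i + t + 2))
      (1 / qint q (t + 1) - (1 - q)) := by
  set u : ℕ → ℝ := fun n => 1 / qint q (n + 1) with hu
  have hnn : ∀ i : ℕ, 0 ≤ 1 / qint q (i + t + 1) - 1 / qint q (i + t + 2) := by
    intro i
    have h1 : 0 < qint q (i + t + 1) := qint_pos hq0 hq1 (by omega)
    have h2 := qint_mono_succ hq0 hq1 (i + t)
    have := one_div_le_one_div_of_le h1 h2
    linarith
  rw [hasSum_iff_tendsto_nat_of_nonneg hnn]
  have hps : ∀ N : ℕ, ∑ i ∈ Finset.range N,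
      (1 / qint q (i + t + 1) - 1 / qint q (i + t + 2)) =
      1 / qint q (t + 1) - 1 / qint q (N + t + 1) := by
    intro N
    have e1 : ∑ i ∈ Finset.range N, (1 / qint q (i + t + 1) - 1 / qint q (i + t + 2))
        = ∑ i ∈ Finset.range N, ((fun i => 1 / qint q (i + t + 1)) i -
            (fun i => 1 / qint q (i + t + 1)) (i + 1)) := by
      apply Finset.sum_congr rfl
      intro i _
      have h2 : i + t + 2 = i + 1 + t + 1 := by omega
      rw [h2]
    rw [e1, Finset.sum_range_sub']
    have e2 : 0 + t + 1 = t + 1 := by omega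
    rw [e2]
  simp only [hps]
  have hlim : Filter.Tendsto (fun N : ℕ => u (N + t)) Filter.atTop (nhds (1 - q)) :=
    (tendsto_one_div_qint hq0 hq1).comp (Filter.tendsto_add_atTop_nat t)
  have hlim2 : Filter.Tendsto (fun N : ℕ => 1 / qint q (N + t + 1)) Filter.atTop
      (nhds (1 - q)) := by
    simpa [hu, Function.comp] using hlim
  exact tendsto_const_nhds.sub hlim2

/-- Telescoping series for the difference with shift m. -/
lemma telescope (hq0 : 0 < q) (hq1 : q < 1) (m : ℕ) :
    HasSum (fun i : ℕ => 1 / qint q (i + 1) - 1 / qint q (i + 1 + m)) (qS q m) := by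
  have hterm : ∀ t ∈ Finset.range m,
      HasSum (fun i : ℕ => 1 / qint q (i + t + 1) - 1 / qint q (i + t + 2))
        (1 / qint q (t + 1) - (1 - q)) := fun t _ => telescope_single hq0 hq1 t
  have H := hasSum_sum hterm
  have hpt : ∀ i : ℕ, 1 / qint q (i + 1) - 1 / qint q (i + 1 + m) =
      ∑ t ∈ Finset.range m,
      (1 / qint q (i + t + 1) - 1 / qint q (i + t + 2)) := by
    intro i
    have e1 : ∑ t ∈ Finset.range m, (1 / qint q (i + t + 1) - 1 / qint q (i + t + 2))
        = ∑ t ∈ Finset.range m, ((fun t => 1 / qint q (i + t + 1)) t -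
            (fun t => 1 / qint q (i + t + 1)) (t + 1)) := by
      apply Finset.sum_congr rfl
      intro t _
      have h2 : i + t + 2 = i + (t + 1) + 1 := by omega
      rw [h2]
    rw [e1, Finset.sum_range_sub']
    have e2 : i + 0 + 1 = i + 1 := by omega
    have e3 : i + m + 1 = i + 1 + m := by omega
    rw [e2, e3]
  have hval : ∑ t ∈ Finset.range m, (1 / qint q (t + 1) - (1 - q)) = qS q m := by
    unfold qS
    apply Finset.sum_congr rfl
    intro t _
    have := qA_eq hq0 hq1 (m := t + 1) (by omega)
    unfold qA at this
    linarith
  rw [← hval]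
  exact HasSum.congr_fun H hpt


lemma one_le_powR {x : ℝ} (hx : 1 ≤ x) (n : ℕ) : 1 ≤ x ^ n := by
  induction n with
  | zero => simp
  | succ n ih => rw [pow_succ]; nlinarith

/-- Pointwise partial fraction. -/
lemma pointwise1 (hq0 : 0 < q) (hq1 : q < 1) {n m : ℕ} (hn : 1 ≤ n) (hm : 1 ≤ m) :
    qA q m * (1 / qint q n - 1 / qint q (n + m)) =
      q ^ (n + m) / (qint q (n + m) * qint q n) := by
  have h := qint_add hq1 n m
  have pn : 0 < qint q n := qint_pos hq0 hq1 hn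
  have pm : 0 < qint q m := qint_pos hq0 hq1 hm
  have pq : (0 : ℝ) < q ^ n := pow_pos hq0 n
  have pX : 0 < qint q n + q ^ n * qint q m := by positivity
  unfold qA
  rw [h, pow_add]
  field_simp
  ring

/-- Inner sum for part 1. -/
lemma inner1 (hq0 : 0 < q) (hq1 : q < 1) {m : ℕ} (hm : 1 ≤ m) :
    HasSum (fun i : ℕ => q ^ (i + 1 + m) / (qint q (i + 1 + m) * qint q (i + 1)))
      (qA q m * qS q m) := by
  have H := (telescope hq0 hq1 m).mul_left (qA q m)
  exact HasSum.congr_fun H fun i => (pointwise1 hq0 hq1 (n := i + 1) (by omega) hm).symm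

/-- Inner finite sum for part 2. -/
lemma inner2 (hq0 : 0 < q) (hq1 : q < 1) (n : ℕ) :
    ∑ b ∈ Finset.range (n + 1), 1 / (q ^ (b + 1) * qint q (n + 1 - b)) =
      qS q (n + 1) / q ^ (n + 2) := by
  unfold qS
  rw [Finset.sum_div]
  conv_rhs => rw [← Finset.sum_range_reflect]
  apply Finset.sum_congr rfl
  intro b hb
  have hble : b ≤ n := Nat.lt_succ_iff.mp (Finset.mem_range.mp hb)
  have e0 : n + 1 - 1 - b = n - b := by omega
  rw [e0]
  have e2 : n + 1 - b = n - b + 1 := by omega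
  rw [e2]
  have hx : q ^ (b + 1) * q ^ (n - b + 1) = q ^ (n + 2) := by
    rw [← pow_add]; congr 1; omega
  have h1 : qint q (n - b + 1) ≠ 0 := (qint_pos hq0 hq1 (by omega)).ne'
  have h2 : (q : ℝ) ^ (n - b + 1) ≠ 0 := (pow_pos hq0 _).ne'
  have h3 : (q : ℝ) ^ (b + 1) ≠ 0 := (pow_pos hq0 _).ne'
  have h4 : (q : ℝ) ^ (n + 2) ≠ 0 := (pow_pos hq0 _).ne'
  field_simp
  rw [← hx]

/-- W-value. -/
noncomputable def Wf (q : ℝ) (k m : ℕ) : ℝ := q ^ ((k - 1) * m) / qint q m ^ k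

lemma qA_pow_div (hq0 : 0 < q) (hq1 : q < 1) {k : ℕ} (hk : 1 ≤ k) {m : ℕ} (hm : 1 ≤ m) :
    qA q m ^ k / q ^ m = Wf q k m := by
  have hY : qint q m ≠ 0 := (qint_pos hq0 hq1 hm).ne'
  have hq : (q : ℝ) ^ m ≠ 0 := (pow_pos hq0 m).ne'
  unfold qA Wf
  rw [div_pow, ← pow_mul]
  have e : m * k = (k - 1) * m + m := by
    have h' : k - 1 + 1 = k := by omega
    calc m * k = m * ((k - 1) + 1) := by rw [h']
      _ = (k - 1) * m + m := by ring
  rw [e, pow_add]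
  field_simp

lemma Wf_nonneg (hq0 : 0 < q) (hq1 : q < 1) (k : ℕ) {m : ℕ} (hm : 1 ≤ m) :
    0 ≤ Wf q k m := by
  unfold Wf
  exact div_nonneg (le_of_lt (pow_pos hq0 _)) (le_of_lt (pow_pos (qint_pos hq0 hq1 hm) _))

lemma Wf_le (hq0 : 0 < q) (hq1 : q < 1) {k : ℕ} (hk : 2 ≤ k) {m : ℕ} (hm : 1 ≤ m) :
    Wf q k m ≤ q ^ m := by
  unfold Wf
  calc q ^ ((k - 1) * m) / qint q m ^ k ≤ q ^ ((k - 1) * m) / 1 := by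
        apply div_le_div_of_nonneg_left (le_of_lt (pow_pos hq0 _)) one_pos
        exact one_le_powR (qint_one_le hq0 hq1 hm) k
    _ = q ^ ((k - 1) * m) := by rw [div_one]
    _ ≤ q ^ m := by
        apply pow_le_pow_of_le_one hq0.le hq1.le
        have : 1 * m ≤ (k - 1) * m := Nat.mul_le_mul_right m (by omega)
        omega

lemma summable_W_mul (hq0 : 0 < q) (hq1 : q < 1) {k : ℕ} (hk : 2 ≤ k) (s : ℕ)
    {g : ℕ → ℝ} (h0 : ∀ n, 0 ≤ g n) (hle : ∀ n, g n ≤ q / (1 - q)) :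
    Summable (fun n => Wf q k (n + s + 1) * g n) := by
  apply summable_of_le_geom hq0 hq1 (C := q / (1 - q))
  · intro n
    exact mul_nonneg (Wf_nonneg hq0 hq1 k (by omega)) (h0 n)
  · intro n
    have h1 : Wf q k (n + s + 1) ≤ q ^ (n + s + 1) := Wf_le hq0 hq1 hk (by omega)
    have h2 : q ^ (n + s + 1) ≤ q ^ n := pow_le_pow_of_le_one hq0.le hq1.le (by omega)
    have h3 : 0 ≤ Wf q k (n + s + 1) := Wf_nonneg hq0 hq1 k (by omega)
    calc Wf q k (n + s + 1) * g n ≤ q ^ n * (q / (1 - q)) := by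
          apply mul_le_mul (le_trans h1 h2) (hle n) (h0 n) (le_of_lt (pow_pos hq0 n))
      _ = q / (1 - q) * q ^ n := by ring

/-- Part 1 summand. -/
noncomputable def H1f (q : ℝ) (k : ℕ) (p : ℕ × ℕ) : ℝ :=
  qA q (p.2 + 1) ^ (k - 1) *
    (q ^ (p.1 + 1 + (p.2 + 1)) / (qint q (p.1 + 1 + (p.2 + 1)) * qint q (p.1 + 1))) /
    q ^ (p.2 + 1)

/-- Part 2 summand. -/
noncomputable def H2f (q : ℝ) (k : ℕ) (p : ℕ × ℕ) : ℝ :=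
  qA q (p.2 + p.1 + 2) ^ k / (q ^ (p.2 + 1) * qint q (p.1 + 1))

lemma H1f_nonneg (hq0 : 0 < q) (hq1 : q < 1) (k : ℕ) (p : ℕ × ℕ) : 0 ≤ H1f q k p := by
  unfold H1f
  have := qA_nonneg hq0 hq1 (p.2 + 1)
  have h1 : 0 < qint q (p.1 + 1 + (p.2 + 1)) := qint_pos hq0 hq1 (by omega)
  have h2 : 0 < qint q (p.1 + 1) := qint_pos hq0 hq1 (by omega)
  have h3 : (0:ℝ) < q ^ (p.1 + 1 + (p.2 + 1)) := pow_pos hq0 _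
  have h4 : (0:ℝ) < q ^ (p.2 + 1) := pow_pos hq0 _
  positivity

lemma H2f_nonneg (hq0 : 0 < q) (hq1 : q < 1) (k : ℕ) (p : ℕ × ℕ) : 0 ≤ H2f q k p := by
  unfold H2f
  have := qA_nonneg hq0 hq1 (p.2 + p.1 + 2)
  have h2 : 0 < qint q (p.1 + 1) := qint_pos hq0 hq1 (by omega)
  have h4 : (0:ℝ) < q ^ (p.2 + 1) := pow_pos hq0 _
  positivity

lemma summable_H1f (hq0 : 0 < q) (hq1 : q < 1) {k : ℕ} (hk : 2 ≤ k) :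
    Summable (H1f q k) := by
  apply summable_of_le_geom2 hq0 hq1 (H1f_nonneg hq0 hq1 k)
  intro p
  unfold H1f
  have hA : qA q (p.2 + 1) ≤ q ^ (p.2 + 1) := qA_le hq0 hq1 (by omega)
  have hA0 : 0 ≤ qA q (p.2 + 1) := qA_nonneg hq0 hq1 _
  have hbpow : qA q (p.2 + 1) ^ (k - 1) ≤ q ^ (p.2 + 1) := by
    calc qA q (p.2 + 1) ^ (k - 1) ≤ (q ^ (p.2 + 1)) ^ (k - 1) :=
          pow_le_pow_left₀ hA0 hA _
      _ ≤ (q ^ (p.2 + 1)) ^ 1 := by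
          apply pow_le_pow_of_le_one (le_of_lt (pow_pos hq0 _))
            (le_of_lt (qpow_lt_one hq0 hq1 (by omega))) (by omega)
      _ = q ^ (p.2 + 1) := pow_one _
  have hmid : q ^ (p.1 + 1 + (p.2 + 1)) / (qint q (p.1 + 1 + (p.2 + 1)) * qint q (p.1 + 1))
      ≤ q ^ (p.1 + 1 + (p.2 + 1)) := by
    apply div_le_self (le_of_lt (pow_pos hq0 _))
    have h1 : (1:ℝ) ≤ qint q (p.1 + 1 + (p.2 + 1)) := qint_one_le hq0 hq1 (by omega)
    have h2 : (1:ℝ) ≤ qint q (p.1 + 1) := qint_one_le hq0 hq1 (by omega)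
    nlinarith
  have hmid0 : 0 ≤ q ^ (p.1 + 1 + (p.2 + 1)) /
      (qint q (p.1 + 1 + (p.2 + 1)) * qint q (p.1 + 1)) := by
    have h1 : 0 < qint q (p.1 + 1 + (p.2 + 1)) := qint_pos hq0 hq1 (by omega)
    have h2 : 0 < qint q (p.1 + 1) := qint_pos hq0 hq1 (by omega)
    positivity
  have hstep : qA q (p.2 + 1) ^ (k - 1) *
      (q ^ (p.1 + 1 + (p.2 + 1)) / (qint q (p.1 + 1 + (p.2 + 1)) * qint q (p.1 + 1))) ≤
      q ^ (p.2 + 1) * q ^ (p.1 + 1 + (p.2 + 1)) :=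
    mul_le_mul hbpow hmid hmid0 (le_of_lt (pow_pos hq0 _))
  have hq2 : (0:ℝ) < q ^ (p.2 + 1) := pow_pos hq0 _
  calc qA q (p.2 + 1) ^ (k - 1) *
      (q ^ (p.1 + 1 + (p.2 + 1)) / (qint q (p.1 + 1 + (p.2 + 1)) * qint q (p.1 + 1))) /
      q ^ (p.2 + 1)
      ≤ q ^ (p.2 + 1) * q ^ (p.1 + 1 + (p.2 + 1)) / q ^ (p.2 + 1) :=
        (div_le_div_iff_of_pos_right hq2).mpr hstep
    _ = q ^ (p.1 + 1 + (p.2 + 1)) := by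
        rw [mul_comm, mul_div_assoc, div_self hq2.ne', mul_one]
    _ ≤ q ^ (p.1 + p.2) := pow_le_pow_of_le_one hq0.le hq1.le (by omega)
    _ = q ^ p.1 * q ^ p.2 := pow_add q _ _

lemma summable_H2f (hq0 : 0 < q) (hq1 : q < 1) {k : ℕ} (hk : 2 ≤ k) :
    Summable (H2f q k) := by
  apply summable_of_le_geom2 hq0 hq1 (H2f_nonneg hq0 hq1 k)
  intro p
  unfold H2f
  have hA : qA q (p.2 + p.1 + 2) ≤ q ^ (p.2 + p.1 + 2) := qA_le hq0 hq1 (by omega)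
  have hA0 : 0 ≤ qA q (p.2 + p.1 + 2) := qA_nonneg hq0 hq1 _
  have hZ : (1:ℝ) ≤ qint q (p.1 + 1) := qint_one_le hq0 hq1 (by omega)
  have hq2 : (0:ℝ) < q ^ (p.2 + 1) := pow_pos hq0 _
  have hnum : qA q (p.2 + p.1 + 2) ^ k ≤ (q ^ (p.2 + p.1 + 2)) ^ k :=
    pow_le_pow_left₀ hA0 hA k
  have hkm : p.2 + 1 + (p.1 + p.2) ≤ (p.2 + p.1 + 2) * k := by
    calc p.2 + 1 + (p.1 + p.2) ≤ (p.2 + p.1 + 2) * 2 := by omega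
      _ ≤ (p.2 + p.1 + 2) * k := Nat.mul_le_mul_left _ hk
  have hb : (q ^ (p.2 + p.1 + 2)) ^ k / q ^ (p.2 + 1) ≤ q ^ (p.1 + p.2) := by
    rw [← pow_mul]
    have e : (p.2 + p.1 + 2) * k = (p.2 + 1) + ((p.2 + p.1 + 2) * k - (p.2 + 1)) := by omega
    rw [e, pow_add, mul_comm, mul_div_assoc, div_self hq2.ne', mul_one]
    apply pow_le_pow_of_le_one hq0.le hq1.le
    omega
  calc qA q (p.2 + p.1 + 2) ^ k / (q ^ (p.2 + 1) * qint q (p.1 + 1))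
      ≤ (q ^ (p.2 + p.1 + 2)) ^ k / q ^ (p.2 + 1) := by
        apply div_le_div₀ (le_of_lt (pow_pos (pow_pos hq0 _) _)) hnum hq2
        nlinarith
    _ ≤ q ^ (p.1 + p.2) := hb
    _ = q ^ p.1 * q ^ p.2 := pow_add q _ _


/-- Core per-pair telescoping identity. -/
lemma stepA_core (hq0 : 0 < q) (hq1 : q < 1) {k : ℕ} (hk : 2 ≤ k) {m2 n : ℕ}
    (hm2 : 1 ≤ m2) (hn : 1 ≤ n) :
    ∑ j ∈ Finset.range (k - 1),
      q ^ ((k - j - 1) * (m2 + n) + j * m2) /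
        (qint q (m2 + n) ^ (k - j) * qint q m2 ^ (j + 1)) =
    qA q m2 ^ (k - 1) * (q ^ (m2 + n) / (qint q (m2 + n) * qint q n)) / q ^ m2
      - qA q (m2 + n) ^ k / (q ^ m2 * qint q n) := by
  have hM1 : 1 ≤ m2 + n := by omega
  have pX : 0 < qint q (m2 + n) := qint_pos hq0 hq1 hM1
  have pY : 0 < qint q m2 := qint_pos hq0 hq1 hm2
  have pZ : 0 < qint q n := qint_pos hq0 hq1 hn
  have pq2 : (0 : ℝ) < q ^ m2 := pow_pos hq0 m2
  have pqM : (0 : ℝ) < q ^ (m2 + n) := pow_pos hq0 _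
  have hXv : qint q (m2 + n) = qint q m2 + q ^ m2 * qint q n := qint_add hq1 m2 n
  have hba : qA q m2 - qA q (m2 + n)
      = (q ^ m2 * qint q n) / (qint q (m2 + n) * qint q m2) := by
    rw [qA_eq hq0 hq1 hM1, qA_eq hq0 hq1 hm2, hXv]
    field_simp
    ring
  have hterm : ∀ j ∈ Finset.range (k - 1),
      q ^ ((k - j - 1) * (m2 + n) + j * m2) /
        (qint q (m2 + n) ^ (k - j) * qint q m2 ^ (j + 1))
      = ((fun j => qA q (m2 + n) ^ (k - j) * qA q m2 ^ j) (j + 1)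
          - (fun j => qA q (m2 + n) ^ (k - j) * qA q m2 ^ j) j)
          / (q ^ m2 * qint q n) := by
    intro j hj
    have hjk : j < k - 1 := Finset.mem_range.mp hj
    simp only []
    have e1 : k - (j + 1) = k - j - 1 := (Nat.sub_sub k j 1)
    rw [e1]
    set E := k - j - 1 with hE
    have e2 : k - j = E + 1 := by omega
    rw [e2]
    have key : qA q (m2 + n) ^ E * qA q m2 ^ (j + 1)
        - qA q (m2 + n) ^ (E + 1) * qA q m2 ^ j
        = qA q (m2 + n) ^ E * qA q m2 ^ j * (qA q m2 - qA q (m2 + n)) := by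
      ring
    rw [key, hba]
    have eexp : q ^ (E * (m2 + n) + j * m2)
        = (q ^ (m2 + n)) ^ E * (q ^ m2) ^ j := by
      rw [pow_add, Nat.mul_comm E (m2 + n), Nat.mul_comm j m2, pow_mul, pow_mul]
    rw [eexp]
    have ha : qA q (m2 + n) = q ^ (m2 + n) / qint q (m2 + n) := rfl
    have hb2 : qA q m2 = q ^ m2 / qint q m2 := rfl
    rw [ha, hb2, div_pow, div_pow]
    field_simp
    ring
  rw [Finset.sum_congr rfl hterm, ← Finset.sum_div, Finset.sum_range_sub
    (fun j => qA q (m2 + n) ^ (k - j) * qA q m2 ^ j)]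
  have ekk : k - (k - 1) = 1 := by omega
  rw [ekk, pow_one]
  simp only [Nat.sub_zero, pow_zero, mul_one]
  have ha : qA q (m2 + n) = q ^ (m2 + n) / qint q (m2 + n) := rfl
  rw [sub_div]
  congr 1
  rw [ha]
  field_simp

/-- Part 1 evaluation. -/
lemma part1 (hq0 : 0 < q) (hq1 : q < 1) {k : ℕ} (hk : 2 ≤ k) :
    ∑' p : ℕ × ℕ, H1f q k p = ∑' j : ℕ, Wf q k (j + 1) * qS q (j + 1) := by
  have hkey1 : ∀ j : ℕ, HasSum (fun i => H1f q k (i, j)) (Wf q k (j + 1) * qS q (j + 1)) := by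
    intro j
    have H := (inner1 hq0 hq1 (m := j + 1) (by omega)).mul_left
      (qA q (j + 1) ^ (k - 1) / q ^ (j + 1))
    have hval : qA q (j + 1) ^ (k - 1) / q ^ (j + 1) * (qA q (j + 1) * qS q (j + 1))
        = Wf q k (j + 1) * qS q (j + 1) := by
      have hpow : qA q (j + 1) ^ (k - 1) * qA q (j + 1) = qA q (j + 1) ^ k := by
        rw [← pow_succ]; congr 1; omega
      calc qA q (j + 1) ^ (k - 1) / q ^ (j + 1) * (qA q (j + 1) * qS q (j + 1))
          = (qA q (j + 1) ^ (k - 1) * qA q (j + 1)) / q ^ (j + 1) * qS q (j + 1) := by ring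
        _ = (qA q (j + 1) ^ k / q ^ (j + 1)) * qS q (j + 1) := by rw [hpow]
        _ = Wf q k (j + 1) * qS q (j + 1) := by
            rw [qA_pow_div hq0 hq1 (by omega) (by omega)]
    rw [← hval]
    exact HasSum.congr_fun H fun i => by unfold H1f; ring
  have hs : Summable fun x : ℕ × ℕ => H1f q k (x.2, x.1) := by
    have := ((Equiv.prodComm ℕ ℕ).summable_iff (f := H1f q k)).mpr (summable_H1f hq0 hq1 hk)
    exact this
  calc ∑' p : ℕ × ℕ, H1f q k p
      = ∑' x : ℕ × ℕ, H1f q k ((Equiv.prodComm ℕ ℕ) x) :=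
        ((Equiv.prodComm ℕ ℕ).tsum_eq (H1f q k)).symm
    _ = ∑' (j : ℕ) (i : ℕ), H1f q k (i, j) :=
        hs.tsum_prod' fun j => (hkey1 j).summable
    _ = ∑' j : ℕ, Wf q k (j + 1) * qS q (j + 1) := tsum_congr fun j => (hkey1 j).tsum_eq

/-- Part 2 evaluation. -/
lemma part2 (hq0 : 0 < q) (hq1 : q < 1) {k : ℕ} (hk : 2 ≤ k) :
    ∑' p : ℕ × ℕ, H2f q k p = ∑' n : ℕ, Wf q k (n + 2) * qS q (n + 1) := by
  have hs : Summable fun x : (Σ _n : ℕ, Fin (_n + 1)) => H2f q k (triEquiv x) :=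
    (triEquiv.summable_iff (f := H2f q k)).mpr (summable_H2f hq0 hq1 hk)
  calc ∑' p : ℕ × ℕ, H2f q k p
      = ∑' x : (Σ _n : ℕ, Fin (_n + 1)), H2f q k (triEquiv x) :=
        (triEquiv.tsum_eq (H2f q k)).symm
    _ = ∑' (n : ℕ) (b : Fin (n + 1)), H2f q k (triEquiv ⟨n, b⟩) :=
        hs.tsum_sigma' (fun n => (hasSum_fintype _).summable)
    _ = ∑' n : ℕ, Wf q k (n + 2) * qS q (n + 1) := by
        apply tsum_congr
        intro n
        have step1 : ∑' b : Fin (n + 1), H2f q k (triEquiv ⟨n, b⟩)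
            = ∑ t ∈ Finset.range (n + 1), H2f q k (n - t, t) := by
          rw [tsum_fintype]
          exact Fin.sum_univ_eq_sum_range (fun t => H2f q k (n - t, t)) (n + 1)
        rw [step1]
        have step2 : ∀ t ∈ Finset.range (n + 1),
            H2f q k (n - t, t) = qA q (n + 2) ^ k * (1 / (q ^ (t + 1) * qint q (n + 1 - t))) := by
          intro t ht
          have htn : t ≤ n := Nat.lt_succ_iff.mp (Finset.mem_range.mp ht)
          unfold H2f
          have e1 : t + (n - t) + 2 = n + 2 := by omega
          have e2 : (n - t) + 1 = n + 1 - t := by omega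
          rw [e1, e2, mul_one_div]
        rw [Finset.sum_congr rfl step2, ← Finset.mul_sum, inner2 hq0 hq1 n]
        calc qA q (n + 2) ^ k * (qS q (n + 1) / q ^ (n + 2))
            = (qA q (n + 2) ^ k / q ^ (n + 2)) * qS q (n + 1) := by ring
          _ = Wf q k (n + 2) * qS q (n + 1) := by
              rw [qA_pow_div hq0 hq1 (by omega) (by omega)]


end Stmt7Aux

open Stmt7Aux in
theorem stmt_7 (q : ℝ) (hq0 : 0 < q) (hq1 : q < 1) (k : ℕ) (hk : 2 ≤ k) :
    ∑ j ∈ Finset.range (k - 1), zetaQ2 q (k - j) (j + 1) = zetaQ q (k + 1) := by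
  have hsumT : ∀ j ∈ Finset.range (k - 1),
      Summable (fun p : ℕ × ℕ =>
        q ^ ((k - j - 1) * (p.2 + p.1 + 2) + j * (p.2 + 1)) /
          (qint q (p.2 + p.1 + 2) ^ (k - j) * qint q (p.2 + 1) ^ (j + 1))) := by
    intro j hj
    have hjk : j < k - 1 := Finset.mem_range.mp hj
    apply summable_of_le_geom2 hq0 hq1
    · intro p
      have h1 : 0 < qint q (p.2 + p.1 + 2) := qint_pos hq0 hq1 (by omega)
      have h2 : 0 < qint q (p.2 + 1) := qint_pos hq0 hq1 (by omega)
      positivity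
    · intro p
      have hd1 : (1 : ℝ) ≤ qint q (p.2 + p.1 + 2) ^ (k - j) * qint q (p.2 + 1) ^ (j + 1) := by
        have A1 : (1 : ℝ) ≤ qint q (p.2 + p.1 + 2) ^ (k - j) :=
          one_le_powR (qint_one_le hq0 hq1 (by omega)) _
        have A2 : (1 : ℝ) ≤ qint q (p.2 + 1) ^ (j + 1) :=
          one_le_powR (qint_one_le hq0 hq1 (by omega)) _
        nlinarith
      have hle : p.1 + p.2 ≤ (k - j - 1) * (p.2 + p.1 + 2) + j * (p.2 + 1) := by
        calc p.1 + p.2 ≤ p.2 + p.1 + 2 := by omega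
          _ ≤ (k - j - 1) * (p.2 + p.1 + 2) := Nat.le_mul_of_pos_left _ (by omega)
          _ ≤ _ := Nat.le_add_right _ _
      calc q ^ ((k - j - 1) * (p.2 + p.1 + 2) + j * (p.2 + 1)) /
            (qint q (p.2 + p.1 + 2) ^ (k - j) * qint q (p.2 + 1) ^ (j + 1))
          ≤ q ^ ((k - j - 1) * (p.2 + p.1 + 2) + j * (p.2 + 1)) :=
            div_le_self (le_of_lt (pow_pos hq0 _)) hd1
        _ ≤ q ^ (p.1 + p.2) := pow_le_pow_of_le_one hq0.le hq1.le hle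
        _ = q ^ p.1 * q ^ p.2 := pow_add q _ _
  have hstepA : ∀ p : ℕ × ℕ,
      (∑ j ∈ Finset.range (k - 1),
        q ^ ((k - j - 1) * (p.2 + p.1 + 2) + j * (p.2 + 1)) /
          (qint q (p.2 + p.1 + 2) ^ (k - j) * qint q (p.2 + 1) ^ (j + 1)))
      = H1f q k p - H2f q k p := by
    intro p
    have core := stepA_core hq0 hq1 hk (m2 := p.2 + 1) (n := p.1 + 1) (by omega) (by omega)
    have eM : (p.2 + 1) + (p.1 + 1) = p.2 + p.1 + 2 := by omega
    rw [eM] at core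
    unfold H1f H2f
    have eM2 : p.1 + 1 + (p.2 + 1) = p.2 + p.1 + 2 := by omega
    rw [eM2]
    exact core
  simp only [zetaQ2, Nat.add_sub_cancel]
  have hint := Summable.tsum_finsetSum hsumT
  rw [← hint, tsum_congr hstepA,
    Summable.tsum_sub (summable_H1f hq0 hq1 hk) (summable_H2f hq0 hq1 hk),
    part1 hq0 hq1 hk, part2 hq0 hq1 hk]
  -- zetaQ side
  have hz : ∀ m : ℕ, q ^ ((k + 1 - 1) * (m + 1)) / qint q (m + 1) ^ (k + 1)
      = Wf q k (m + 1) * (q ^ (m + 1) / qint q (m + 1)) := by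
    intro m
    have e : (k + 1 - 1) * (m + 1) = (k - 1) * (m + 1) + (m + 1) := by
      have h' : k + 1 - 1 = (k - 1) + 1 := by omega
      rw [h', add_mul, one_mul]
    unfold Wf
    rw [e, pow_add, pow_succ]
    exact (div_mul_div_comm _ _ _ _).symm
  rw [zetaQ, tsum_congr hz]
  -- summability facts
  have hqA_le' : ∀ n : ℕ, q ^ (n + 1) / qint q (n + 1) ≤ q / (1 - q) := by
    intro n
    have h1 : qA q (n + 1) ≤ q ^ (n + 1) := qA_le hq0 hq1 (by omega)
    have h2 : q ^ (n + 1) ≤ q := qpow_le_q hq0 hq1 (by omega)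
    have h3 : q ≤ q / (1 - q) := by
      rw [le_div_iff₀ (one_sub_pos hq1)]
      nlinarith
    calc q ^ (n + 1) / qint q (n + 1) = qA q (n + 1) := rfl
      _ ≤ q ^ (n + 1) := h1
      _ ≤ q := h2
      _ ≤ q / (1 - q) := h3
  have hqA0 : ∀ n : ℕ, 0 ≤ q ^ (n + 1) / qint q (n + 1) := fun n => qA_nonneg hq0 hq1 (n + 1)
  have hS0 : ∀ n : ℕ, 0 ≤ qS q (n + 1) := fun n => qS_nonneg hq0 hq1 _
  have hSle : ∀ n : ℕ, qS q (n + 1) ≤ q / (1 - q) := fun n => qS_le hq0 hq1 _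
  have hf1 : Summable (fun j : ℕ => Wf q k (j + 1) * qS q (j + 1)) :=
    summable_W_mul hq0 hq1 hk 0 (g := fun n => qS q (n + 1)) hS0 hSle
  have hf2 : Summable (fun n : ℕ => Wf q k (n + 2) * qS q (n + 1)) :=
    summable_W_mul hq0 hq1 hk 1 (g := fun n => qS q (n + 1)) hS0 hSle
  have hf1s : Summable (fun n : ℕ => Wf q k (n + 2) * qS q (n + 2)) :=
    summable_W_mul hq0 hq1 hk 1 (g := fun n => qS q (n + 2))
      (fun n => qS_nonneg hq0 hq1 _) (fun n => qS_le hq0 hq1 _)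
  have hz' : Summable (fun m : ℕ => Wf q k (m + 1) * (q ^ (m + 1) / qint q (m + 1))) :=
    summable_W_mul hq0 hq1 hk 0 (g := fun n => q ^ (n + 1) / qint q (n + 1)) hqA0 hqA_le'
  rw [Summable.tsum_eq_zero_add hf1, Summable.tsum_eq_zero_add hz']
  simp only [show ∀ n : ℕ, n + 1 + 1 = n + 2 from fun _ => rfl,
    show (0 : ℕ) + 1 = 1 from rfl]
  rw [add_sub_assoc]
  congr 1
  · rw [qS_one]
    norm_num
  · rw [← Summable.tsum_sub hf1s hf2]
    apply tsum_congr
    intro n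
    have hss : qS q (n + 2) = qS q (n + 1) + q ^ (n + 2) / qint q (n + 2) := qS_succ (n + 1)
    rw [hss]
    ring
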